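/- Let K be a field of characteristic different from 2 containing a primitive n-th root of unity for an odd positive integer n. Then the quadratic form n × ⟨1⟩ (the sum of n squares form) is isometric to ⟨(-1)^((n-1)/2)⟩ ⊥ ((n-1)/2) × H, where H = ⟨1,-1⟩ is the hyperbolic plane. -/

import Mathlib

open Finset Polynomial

private lemma not_dvd_of_bounds {d k : ℕ} (h1 : 0 < k) (h2 : k < 2 * d) (h3 : k ≠ d) :
    ¬ d ∣ k := by
  rintro ⟨t, rfl⟩
  have ht0 : t ≠ 0 := by rintro rfl; simp at h1
  have ht1 : t ≠ 1 := by rintro rfl; simp at h3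
  have h2t : 2 ≤ t := by omega
  have hle : d * 2 ≤ d * t := Nat.mul_le_mul_left d h2t
  rw [two_mul] at h2
  have : d * t < d * 2 := by omega
  exact absurd (lt_of_le_of_lt hle this) (lt_irrefl _)

/-- `(n : K) = ∏_{j=1}^{n-1} (1 - ω^j)` for a primitive `n`-th root of unity `ω`. -/
private lemma cast_eq_prod_one_sub_pow {K : Type*} [Field K] {n : ℕ} (hpos : 0 < n)
    {ω : K} (hω : IsPrimitiveRoot ω n) :
    (n : K) = ∏ j ∈ Ico 1 n, (1 - ω ^ j) := by
  have hroots : nthRoots n (1 : K) = (Multiset.range n).map (fun i => ω ^ i * 1) :=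
    hω.nthRoots_eq (one_pow n)
  have hmonic : ((X : K[X]) ^ n - C 1).Monic := monic_X_pow_sub_C (1 : K) hpos.ne'
  have hcard : Multiset.card ((X : K[X]) ^ n - C 1).roots = ((X : K[X]) ^ n - C 1).natDegree := by
    have : ((X : K[X]) ^ n - C 1).roots = nthRoots n (1 : K) := rfl
    rw [this, hroots, Multiset.card_map, Multiset.card_range, natDegree_X_pow_sub_C]
  have hfact : (X : K[X]) ^ n - C 1 = ∏ i ∈ range n, (X - C (ω ^ i)) := by
    conv_lhs => rw [← prod_multiset_X_sub_C_of_monic_of_roots_card_eq hmonic hcard]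
    have : ((X : K[X]) ^ n - C 1).roots = nthRoots n (1 : K) := rfl
    rw [this, hroots, Multiset.map_map, Finset.prod, Finset.range_val]
    congr 1
    exact Multiset.map_congr rfl fun i _ => by simp
  have hsplit : ((X : K[X]) - 1) * ∏ i ∈ Ico 1 n, (X - C (ω ^ i)) =
      ((X : K[X]) - 1) * ∑ i ∈ range n, X ^ i := by
    have h1 : (∏ i ∈ range n, ((X : K[X]) - C (ω ^ i))) =
        ((X : K[X]) - 1) * ∏ i ∈ Ico 1 n, (X - C (ω ^ i)) := by
      rw [range_eq_Ico, prod_eq_prod_Ico_succ_bot hpos]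
      simp
    have h2 : ((X : K[X]) - 1) * ∑ i ∈ range n, X ^ i = X ^ n - C 1 := by
      have := geom_sum_mul (X : K[X]) n
      rw [mul_comm] at this
      rw [this]
      simp
    rw [h2, hfact, h1]
  have hXne : ((X : K[X]) - 1) ≠ 0 := by
    have := X_sub_C_ne_zero (1 : K)
    simpa using this
  have hIco : (∏ i ∈ Ico 1 n, ((X : K[X]) - C (ω ^ i))) = ∑ i ∈ range n, X ^ i :=
    mul_left_cancel₀ hXne hsplit
  have := congrArg (Polynomial.eval (1 : K)) hIco
  simp only [eval_prod, eval_sub, eval_X, eval_C, eval_finset_sum, eval_pow, one_pow,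
    sum_const, card_range, nsmul_eq_mul, mul_one] at this
  exact this.symm

private lemma sum_squares_aux (K : Type*) [Field K] (hchar : ringChar K ≠ 2)
    (m N : ℕ) (hNm : N = 2 * m + 1) (ω : K) (hω : IsPrimitiveRoot ω N) :
    QuadraticMap.Equivalent
      (QuadraticMap.weightedSumSquares K (fun _ : Fin N => (1 : K)))
      (QuadraticMap.weightedSumSquares K
        (Sum.elim (fun _ : Fin 1 => (-1 : K) ^ m)
          (fun p : Fin m × Fin 2 => if p.2 = 0 then (1 : K) else -1))) := by
  classical
  subst hNm
  set N : ℕ := 2 * m + 1 with hN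
  -- basic arithmetic facts
  have h2ne : (2 : K) ≠ 0 := Ring.two_ne_zero hchar
  have hprod : (N : K) = ∏ j ∈ Ico 1 N, (1 - ω ^ j) :=
    cast_eq_prod_one_sub_pow (by omega) hω
  have hfacne : ∀ j ∈ Ico 1 N, (1 : K) - ω ^ j ≠ 0 := by
    intro j hj
    obtain ⟨hj1, hj2⟩ := mem_Ico.mp hj
    exact sub_ne_zero_of_ne (Ne.symm (hω.pow_ne_one_of_pos_of_lt (by omega) hj2))
  have hNne : (N : K) ≠ 0 := by
    rw [hprod]
    exact prod_ne_zero_iff.mpr hfacne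
  -- the discriminant is a square up to `(-1)^m`
  set E : ℕ := ∑ j ∈ range m, (2 * m - j) with hE
  set A : K := ∏ j ∈ range m, (1 - ω ^ (1 + j)) with hA
  have hpair : (N : K) = (-1) ^ m * ω ^ E * A ^ 2 := by
    have e1 : (∏ i ∈ Ico 1 (m + 1), ((1 : K) - ω ^ i)) * ∏ i ∈ Ico (m + 1) N, (1 - ω ^ i)
        = ∏ i ∈ Ico 1 N, (1 - ω ^ i) :=
      prod_Ico_consecutive _ (by omega) (by omega)
    have e2 : (∏ i ∈ Ico 1 (m + 1), ((1 : K) - ω ^ i)) = ∏ j ∈ range m, (1 - ω ^ (1 + j)) := by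
      rw [prod_Ico_eq_prod_range]
      simp
    have e3 : (∏ i ∈ Ico (m + 1) N, ((1 : K) - ω ^ i))
        = ∏ j ∈ range m, (1 - ω ^ (m + 1 + j)) := by
      rw [prod_Ico_eq_prod_range]
      have : N - (m + 1) = m := by omega
      rw [this]
    have e4 : (∏ j ∈ range m, ((1 : K) - ω ^ (m + 1 + j)))
        = ∏ j ∈ range m, (1 - ω ^ (2 * m - j)) := by
      rw [← prod_range_reflect (fun j => (1 : K) - ω ^ (m + 1 + j)) m]
      refine prod_congr rfl fun j hj => ?_
      have hj' := mem_range.mp hj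
      rw [show m + 1 + (m - 1 - j) = 2 * m - j from by omega]
    have e5 : (N : K) = ∏ j ∈ range m, ((1 - ω ^ (1 + j)) * (1 - ω ^ (2 * m - j))) := by
      rw [hprod, ← e1, e2, e3, e4, prod_mul_distrib]
    have e6 : ∀ j ∈ range m, (1 - ω ^ (1 + j)) * ((1 : K) - ω ^ (2 * m - j))
        = (-ω ^ (2 * m - j)) * (1 - ω ^ (1 + j)) ^ 2 := by
      intro j hj
      have hj' := mem_range.mp hj
      have hab : ω ^ (1 + j) * ω ^ (2 * m - j) = 1 := by
        rw [← pow_add, show 1 + j + (2 * m - j) = 2 * m + 1 from by omega]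
        exact hω.pow_eq_one
      linear_combination (ω ^ (1 + j) - 1) * hab
    rw [e5, prod_congr rfl e6, prod_mul_distrib]
    have e7 : (∏ j ∈ range m, (-ω ^ (2 * m - j) : K)) = (-1) ^ m * ω ^ E := by
      rw [prod_congr rfl fun j (_ : j ∈ range m) => (neg_one_mul ((ω : K) ^ (2 * m - j))).symm,
        prod_mul_distrib, prod_const, card_range, prod_pow_eq_pow_sum]
    rw [e7, prod_pow, hA]
  set d : K := ω ^ ((m + 1) * E) * A with hdd
  have hd : d ^ 2 = (-1) ^ m * N := by
    have hsq : (-1 : K) ^ m * (-1) ^ m = 1 := by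
      rw [← pow_add]
      exact Even.neg_one_pow ⟨m, rfl⟩
    have h2 : (ω ^ ((m + 1) * E)) ^ 2 = ω ^ E := by
      rw [← pow_mul, show (m + 1) * E * 2 = (2 * m + 1) * E + E from by ring, pow_add,
        pow_mul, hω.pow_eq_one, one_pow, one_mul]
    have : d ^ 2 = (ω ^ ((m + 1) * E)) ^ 2 * A ^ 2 := by rw [hdd]; ring
    rw [this, h2]
    calc ω ^ E * A ^ 2 = ((-1 : K) ^ m * (-1) ^ m) * (ω ^ E * A ^ 2) := by rw [hsq, one_mul]
      _ = (-1) ^ m * ((-1) ^ m * ω ^ E * A ^ 2) := by ring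
      _ = (-1) ^ m * N := by rw [← hpair]
  set c : K := d / N with hc
  set t : K := (2 * (N : K))⁻¹ with ht
  have h2Nne : (2 * (N : K)) ≠ 0 := mul_ne_zero h2ne hNne
  -- the matrix and its Gram computation
  set s : Fin m × Fin 2 → K := fun p => if p.2 = 0 then t else -t with hs
  set V : Matrix (Fin N) (Fin 1 ⊕ Fin m × Fin 2) K := fun i a =>
    Sum.elim (fun _ => c)
      (fun p => ω ^ ((p.1.1 + 1) * i.1) + s p * ω ^ ((2 * m - p.1.1) * i.1)) a with hV
  set w₂ : (Fin 1 ⊕ Fin m × Fin 2) → K :=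
    Sum.elim (fun _ => (-1 : K) ^ m) (fun p => if p.2 = 0 then (1 : K) else -1) with hw₂
  -- root-of-unity sums
  have hSzero : ∀ k : ℕ, ¬ (N ∣ k) → ∑ i : Fin N, ω ^ (k * i.1) = 0 := by
    intro k hk
    have hx1 : ω ^ k ≠ 1 := fun h => hk ((hω.pow_eq_one_iff_dvd k).mp h)
    have hxn : (ω ^ k) ^ N = 1 := by
      rw [← pow_mul, mul_comm, pow_mul, hω.pow_eq_one, one_pow]
    have hgeom : ∑ i ∈ range N, (ω ^ k) ^ i = 0 := by
      have h := geom_sum_mul (ω ^ k) N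
      rw [hxn, sub_self] at h
      exact (mul_eq_zero.mp h).resolve_right (sub_ne_zero_of_ne hx1)
    calc ∑ i : Fin N, ω ^ (k * i.1) = ∑ i ∈ range N, ω ^ (k * i) :=
          Fin.sum_univ_eq_sum_range (fun j => ω ^ (k * j)) N
      _ = ∑ i ∈ range N, (ω ^ k) ^ i := by
          refine sum_congr rfl fun i _ => ?_
          rw [← pow_mul]
      _ = 0 := hgeom
  have hSn : ∀ k : ℕ, (N ∣ k) → ∑ i : Fin N, ω ^ (k * i.1) = (N : K) := by
    intro k hk
    have h1 : ω ^ k = 1 := (hω.pow_eq_one_iff_dvd k).mpr hk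
    have h2 : ∀ i : Fin N, ω ^ (k * i.1) = 1 := fun i => by
      rw [pow_mul, h1, one_pow]
    rw [Finset.sum_congr rfl fun i _ => h2 i]
    simp [Finset.card_univ]
  -- Gram matrix computation
  have hGram : ∀ a b, ∑ i : Fin N, V i a * V i b = if a = b then w₂ a else 0 := by
    rintro (a0 | p) (b0 | q)
    · -- inl, inl
      rw [if_pos (by rw [Subsingleton.elim a0 b0])]
      simp only [hV, Sum.elim_inl, hw₂]
      rw [Finset.sum_const, Finset.card_univ, Fintype.card_fin, nsmul_eq_mul]
      rw [hc]
      field_simp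
      linear_combination hd
    · -- inl, inr
      rw [if_neg (by simp)]
      simp only [hV, Sum.elim_inl, Sum.elim_inr]
      have h1 : ∀ i : Fin N, c * (ω ^ ((q.1.1 + 1) * i.1) + s q * ω ^ ((2 * m - q.1.1) * i.1))
          = c * ω ^ ((q.1.1 + 1) * i.1) + (c * s q) * ω ^ ((2 * m - q.1.1) * i.1) :=
        fun i => by ring
      have hq := q.1.isLt
      rw [Finset.sum_congr rfl fun i _ => h1 i, Finset.sum_add_distrib, ← Finset.mul_sum,
        ← Finset.mul_sum,
        hSzero _ (not_dvd_of_bounds (by omega) (by omega) (by omega)),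
        hSzero _ (not_dvd_of_bounds (by omega) (by omega) (by omega)),
        mul_zero, mul_zero, add_zero]
    · -- inr, inl
      rw [if_neg (by simp)]
      simp only [hV, Sum.elim_inl, Sum.elim_inr]
      have h1 : ∀ i : Fin N, (ω ^ ((p.1.1 + 1) * i.1) + s p * ω ^ ((2 * m - p.1.1) * i.1)) * c
          = c * ω ^ ((p.1.1 + 1) * i.1) + (c * s p) * ω ^ ((2 * m - p.1.1) * i.1) :=
        fun i => by ring
      have hp := p.1.isLt
      rw [Finset.sum_congr rfl fun i _ => h1 i, Finset.sum_add_distrib, ← Finset.mul_sum,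
        ← Finset.mul_sum,
        hSzero _ (not_dvd_of_bounds (by omega) (by omega) (by omega)),
        hSzero _ (not_dvd_of_bounds (by omega) (by omega) (by omega)),
        mul_zero, mul_zero, add_zero]
    · -- inr, inr
      obtain ⟨jp, εp⟩ := p
      obtain ⟨jq, εq⟩ := q
      have hjp := jp.isLt
      have hjq := jq.isLt
      simp only [hV, Sum.elim_inr]
      have h1 : ∀ i : Fin N,
          (ω ^ ((jp.1 + 1) * i.1) + s (jp, εp) * ω ^ ((2 * m - jp.1) * i.1)) *
            (ω ^ ((jq.1 + 1) * i.1) + s (jq, εq) * ω ^ ((2 * m - jq.1) * i.1))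
          = ω ^ (((jp.1 + 1) + (jq.1 + 1)) * i.1)
            + s (jq, εq) * ω ^ (((jp.1 + 1) + (2 * m - jq.1)) * i.1)
            + s (jp, εp) * ω ^ (((2 * m - jp.1) + (jq.1 + 1)) * i.1)
            + s (jp, εp) * s (jq, εq) * ω ^ (((2 * m - jp.1) + (2 * m - jq.1)) * i.1) := by
        intro i
        have hac : ω ^ ((jp.1 + 1) * i.1) * ω ^ ((jq.1 + 1) * i.1)
            = ω ^ (((jp.1 + 1) + (jq.1 + 1)) * i.1) := by rw [← pow_add, ← Nat.add_mul]
        have had : ω ^ ((jp.1 + 1) * i.1) * ω ^ ((2 * m - jq.1) * i.1)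
            = ω ^ (((jp.1 + 1) + (2 * m - jq.1)) * i.1) := by rw [← pow_add, ← Nat.add_mul]
        have hbc : ω ^ ((2 * m - jp.1) * i.1) * ω ^ ((jq.1 + 1) * i.1)
            = ω ^ (((2 * m - jp.1) + (jq.1 + 1)) * i.1) := by rw [← pow_add, ← Nat.add_mul]
        have hbd : ω ^ ((2 * m - jp.1) * i.1) * ω ^ ((2 * m - jq.1) * i.1)
            = ω ^ (((2 * m - jp.1) + (2 * m - jq.1)) * i.1) := by rw [← pow_add, ← Nat.add_mul]
        linear_combination hac + s (jq, εq) * had + s (jp, εp) * hbc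
          + s (jp, εp) * s (jq, εq) * hbd
      rw [Finset.sum_congr rfl fun i _ => h1 i, Finset.sum_add_distrib, Finset.sum_add_distrib,
        Finset.sum_add_distrib, ← Finset.mul_sum, ← Finset.mul_sum, ← Finset.mul_sum]
      rcases eq_or_ne jp.1 jq.1 with hj | hj
      · have hjeq : jp = jq := Fin.ext hj
        subst hjeq
        rw [hSzero _ (not_dvd_of_bounds (by omega) (by omega) (by omega)),
          hSn ((jp.1 + 1) + (2 * m - jp.1)) ⟨1, by omega⟩,
          hSn ((2 * m - jp.1) + (jp.1 + 1)) ⟨1, by omega⟩,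
          hSzero _ (not_dvd_of_bounds (by omega) (by omega) (by omega))]
        fin_cases εp <;> fin_cases εq <;>
          simp only [hs, hw₂, Sum.elim_inr, Sum.inr.injEq, Prod.mk.injEq] <;>
          norm_num <;> rw [ht] <;> field_simp <;> ring
      · have hne : (Sum.inr (jp, εp) : Fin 1 ⊕ Fin m × Fin 2) ≠ Sum.inr (jq, εq) := by
          intro h
          apply hj
          have := Sum.inr.inj h
          exact congrArg Fin.val (congrArg Prod.fst this)
        rw [if_neg hne,
          hSzero _ (not_dvd_of_bounds (by omega) (by omega) (by omega)),
          hSzero _ (not_dvd_of_bounds (by omega) (by omega) (by omega)),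
          hSzero _ (not_dvd_of_bounds (by omega) (by omega) (by omega)),
          hSzero _ (not_dvd_of_bounds (by omega) (by omega) (by omega))]
        ring
  -- the inverse matrix
  set W : Matrix (Fin 1 ⊕ Fin m × Fin 2) (Fin N) K := fun a i => w₂ a * V i a with hW
  have hw₂sq : ∀ a, w₂ a * w₂ a = 1 := by
    rintro (a0 | p)
    · simp only [hw₂, Sum.elim_inl, ← pow_add]
      exact Even.neg_one_pow ⟨m, rfl⟩
    · simp only [hw₂, Sum.elim_inr]
      split_ifs <;> norm_num
  have hWV : W * V = 1 := by
    ext a b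
    rw [Matrix.mul_apply]
    have h1 : ∀ i, W a i * V i b = w₂ a * (V i a * V i b) := fun i => by
      rw [hW]; ring
    rw [Finset.sum_congr rfl fun i _ => h1 i, ← Finset.mul_sum, hGram a b]
    rcases eq_or_ne a b with rfl | hab
    · rw [if_pos rfl, Matrix.one_apply_eq, hw₂sq]
    · rw [if_neg hab, mul_zero, Matrix.one_apply_ne hab]
  have hcard : Fintype.card (Fin N) = Fintype.card (Fin 1 ⊕ Fin m × Fin 2) := by
    simp [Fintype.card_sum, Fintype.card_prod]
    omega
  have hVW : V * W = 1 :=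
    (Matrix.mul_eq_one_comm_of_equiv (Fintype.equivOfCardEq hcard)).mpr hWV
  -- the linear equivalence
  set f : ((Fin 1 ⊕ Fin m × Fin 2) → K) ≃ₗ[K] (Fin N → K) :=
    LinearEquiv.ofLinear V.mulVecLin W.mulVecLin
      (by rw [← Matrix.mulVecLin_mul, hVW, Matrix.mulVecLin_one])
      (by rw [← Matrix.mulVecLin_mul, hWV, Matrix.mulVecLin_one]) with hf
  have hQ : ∀ y, QuadraticMap.weightedSumSquares K (fun _ : Fin N => (1 : K)) (f y)
      = QuadraticMap.weightedSumSquares K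
          (Sum.elim (fun _ : Fin 1 => (-1 : K) ^ m)
            (fun p : Fin m × Fin 2 => if p.2 = 0 then (1 : K) else -1)) y := by
    intro y
    rw [QuadraticMap.weightedSumSquares_apply, QuadraticMap.weightedSumSquares_apply]
    have hfy : ∀ i, f y i = ∑ a, V i a * y a := by
      intro i
      simp [hf, Matrix.mulVecLin_apply, Matrix.mulVec, dotProduct]
    calc ∑ i : Fin N, (1 : K) • (f y i * f y i)
        = ∑ i : Fin N, (∑ a, V i a * y a) * (∑ b, V i b * y b) := by
          refine sum_congr rfl fun i _ => ?_
          rw [one_smul, hfy]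
      _ = ∑ i : Fin N, ∑ a, ∑ b, (V i a * V i b) * (y a * y b) := by
          refine sum_congr rfl fun i _ => ?_
          rw [Finset.sum_mul_sum]
          exact sum_congr rfl fun a _ => sum_congr rfl fun b _ => by ring
      _ = ∑ a, ∑ b, ∑ i : Fin N, (V i a * V i b) * (y a * y b) := by
          rw [Finset.sum_comm]
          exact sum_congr rfl fun a _ => Finset.sum_comm
      _ = ∑ a, ∑ b, (if a = b then w₂ a else 0) * (y a * y b) := by
          refine sum_congr rfl fun a _ => sum_congr rfl fun b _ => ?_
          rw [← Finset.sum_mul, hGram a b]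
      _ = ∑ a, w₂ a * (y a * y a) := by
          refine sum_congr rfl fun a _ => ?_
          rw [Finset.sum_eq_single a]
          · rw [if_pos rfl]
          · intro b _ hb
            rw [if_neg (Ne.symm hb), zero_mul]
          · intro h
            exact absurd (mem_univ a) h
      _ = _ := by
          refine sum_congr rfl fun a _ => ?_
          rw [smul_eq_mul, hw₂]
  exact QuadraticMap.Equivalent.symm ⟨⟨f, hQ⟩⟩

/-- For `K` a field of characteristic ≠ 2 containing a primitive `n`-th root of unity,
`n` odd, the sum-of-`n`-squares form is isometric to
`⟨(-1)^((n-1)/2)⟩ ⊥ ((n-1)/2) × ℍ` where `ℍ = ⟨1,-1⟩`. -/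
theorem sum_n_squares_equivalent (K : Type*) [Field K] (hchar : ringChar K ≠ 2)
    (n : ℕ) (hpos : 0 < n) (hodd : Odd n) (ω : K) (hω : IsPrimitiveRoot ω n) :
    QuadraticMap.Equivalent
      (QuadraticMap.weightedSumSquares K (fun _ : Fin n => (1 : K)))
      (QuadraticMap.weightedSumSquares K
        (Sum.elim (fun _ : Fin 1 => (-1 : K) ^ ((n - 1) / 2))
          (fun p : Fin ((n - 1) / 2) × Fin 2 => if p.2 = 0 then (1 : K) else -1))) := by
  have hodd' := Nat.odd_iff.mp hodd
  exact sum_squares_aux K hchar ((n - 1) / 2) n (by omega) ω hω
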